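/- There is no chromatic simplicial map δ from the 3^N-fold subdivision of the equality negation input graph to the equality negation output graph that respects inputs (i.e., such that the composition with the projections commutes with the carrier map Δ). Equivalently, the equality negation task for two processes is unsolvable in the N-layer message-passing model for every N. -/

import Mathlib

inductive Proc : Type where
  | B | W
deriving DecidableEq

/-- Vertices of the `m`-fold subdivision of the equality-negation input graph:
the original vertices `(p,i)` together with interior vertices of each subdivided
input edge `e = {(B,i),(W,j)}` at positions `0 < k < m`. -/
inductive SubV (m : ℕ) : Type where
  | orig : Proc → Fin 3 → SubV m
  | inner : Fin 3 × Fin 3 → ℕ → SubV m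
deriving DecidableEq

/-- The `k`-th vertex (0 ≤ k ≤ m) on the subdivision of the input edge
`e = {(B, e.1), (W, e.2)}`: position `0` is the original `B`-endpoint, position `m`
the original `W`-endpoint. -/
def pvtx (m : ℕ) (e : Fin 3 × Fin 3) (k : ℕ) : SubV m :=
  if k = 0 then .orig .B e.1 else if k = m then .orig .W e.2 else .inner e k

/-- Colors alternate along each subdivided edge, starting with `B` at position 0. -/
def scolor {m : ℕ} : SubV m → Proc
  | .orig p _ => p
  | .inner _ k => if Even k then .B else .W

/-- A subdivision vertex inherits the input value of the original endpoint of its color. -/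
def sinput {m : ℕ} : SubV m → Fin 3
  | .orig _ i => i
  | .inner e k => if Even k then e.1 else e.2

open Fin.NatCast Fin.CommRing in
lemma eqneg_key (m : ℕ) (hm0 : m ≠ 0) (hmcast : (m : Fin 2) = 1)
    (δ : SubV m → Proc × Fin 2)
    (hΔ : ∀ e : Fin 3 × Fin 3, ∀ k < m,
      ((e.1 = e.2) ↔ (δ (pvtx m e k)).2 ≠ (δ (pvtx m e (k + 1))).2)) : False := by
  have fin2ne : ∀ a b : Fin 2, a ≠ b → b = a + 1 := by decide
  have fin2self : ∀ a : Fin 2, a ≠ a + 1 := by decide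
  have step : ∀ e : Fin 3 × Fin 3, ∀ k, k ≤ m →
      (δ (pvtx m e k)).2 = (δ (pvtx m e 0)).2 + (if e.1 = e.2 then (k : Fin 2) else 0) := by
    intro e k
    induction k with
    | zero => intro _; simp
    | succ k ih =>
      intro hk
      have hk' : k < m := Nat.lt_of_succ_le hk
      have h := hΔ e k hk'
      have ihk := ih hk'.le
      by_cases he : e.1 = e.2
      · have hne := h.mp he
        rw [fin2ne _ _ hne, ihk]
        simp only [if_pos he]
        push_cast
        ring
      · have heq : (δ (pvtx m e k)).2 = (δ (pvtx m e (k + 1))).2 := by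
          by_contra hc
          exact he (h.mpr hc)
        rw [← heq, ihk]
        simp [he]
  have hend : ∀ e : Fin 3 × Fin 3,
      (δ (SubV.orig Proc.W e.2)).2 =
        (δ (SubV.orig Proc.B e.1)).2 + (if e.1 = e.2 then 1 else 0) := by
    intro e
    have := step e m le_rfl
    rw [show pvtx m e m = SubV.orig Proc.W e.2 by simp [pvtx, hm0],
        show pvtx m e 0 = SubV.orig Proc.B e.1 by simp [pvtx]] at this
    rw [this, hmcast]
  have h02 := hend (0, 2)
  have h10 := hend (1, 0)
  have h12 := hend (1, 2)
  have h00 := hend (0, 0)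
  simp only [show ((0:Fin 3) = 2) = False by simp,
    show ((1:Fin 3) = 0) = False by simp, show ((1:Fin 3) = 2) = False by simp,
    if_false, if_pos rfl, add_zero, if_true] at h02 h10 h12 h00
  have hB : (δ (SubV.orig Proc.B (0:Fin 3))).2 = (δ (SubV.orig Proc.B (1:Fin 3))).2 :=
    h02.symm.trans h12
  rw [h10, ← hB] at h00
  exact fin2self _ h00

open Fin.NatCast Fin.CommRing in
/-- for every number of layers N, there is no color-preserving simplicial map δ
from the 3^N-fold subdivision of the equality-negation input graph to the output graph
(vertices Proc × {0,1}, all chromatic pairs being edges) that respects the carrier map Δ: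
on every edge of the subdivision of an input edge e, the two decisions are distinct iff
the two inputs of e are equal.  Hence equality negation is unsolvable in the N-layer
message-passing model. -/
theorem eqneg_unsolvable_subdivision (N : ℕ) :
    ¬ ∃ δ : SubV (3 ^ N) → Proc × Fin 2,
      (∀ v, (δ v).1 = scolor v) ∧
      (∀ e : Fin 3 × Fin 3, ∀ k < 3 ^ N,
        ((e.1 = e.2) ↔ (δ (pvtx (3 ^ N) e k)).2 ≠ (δ (pvtx (3 ^ N) e (k + 1))).2)) := by
  rintro ⟨δ, _, hΔ⟩
  refine eqneg_key (3 ^ N) (by positivity) ?_ δ hΔ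
  rw [Nat.cast_pow, show ((3:ℕ):Fin 2) = 1 from by decide, one_pow]
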